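/- Let G be a finite 2-group with generators a₁, a₂, a₃ satisfying (modulo G₃ = [G,G']): a₁² ≡ 1, a₂² ≡ c₁₂c₁₃, a₃² ≡ c₁₂, c₂₃ ∈ G₃, where c_{ij} = [a_i,a_j], and such that G/G₃ has order 32 with G'/G₃ ≅ (ℤ/2)². Then G₃ = G₄, and hence by nilpotency G₃ is trivial, so |G| = 32. -/

import Mathlib

open scoped commutatorElement

namespace Gp32041

variable {G : Type*} [Group G]

private lemma mem_L_succ {n : ℕ} {z : G} (hz : z ∈ (⊤ : Subgroup G).lowerCentralSeries n) (g : G) :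
    ⁅z, g⁆ ∈ (⊤ : Subgroup G).lowerCentralSeries (n + 1) := by
  rw [lowerCentralSeries_succ]
  exact Subgroup.commutator_mem_commutator hz (Subgroup.mem_top g)

private lemma comm_mem_L1 (x y : G) : ⁅x, y⁆ ∈ (⊤ : Subgroup G).lowerCentralSeries 1 := by
  rw [lowerCentralSeries_one, commutator_def]
  exact Subgroup.commutator_mem_commutator (Subgroup.mem_top x) (Subgroup.mem_top y)

private lemma sq_of_gen (hderexp : ∀ x ∈ commutator G, x ^ 2 ∈ (⊤ : Subgroup G).lowerCentralSeries 2)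
    {c : G} (hc : c ∈ (⊤ : Subgroup G).lowerCentralSeries 1) (g : G) :
    ⁅c, g⁆ ^ 2 ∈ (⊤ : Subgroup G).lowerCentralSeries 3 := by
  have hc' : c ∈ commutator G := by rwa [lowerCentralSeries_one] at hc
  have hc2 : c ^ 2 ∈ (⊤ : Subgroup G).lowerCentralSeries 2 := hderexp c hc'
  have h1 : ⁅c ^ 2, g⁆ ∈ (⊤ : Subgroup G).lowerCentralSeries 3 := mem_L_succ hc2 g
  have hd : ⁅c, g⁆ ∈ (⊤ : Subgroup G).lowerCentralSeries 2 := mem_L_succ hc g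
  have h2 : ⁅⁅c, g⁆, c⁆ ∈ (⊤ : Subgroup G).lowerCentralSeries 3 := mem_L_succ hd c
  have key : ⁅c, g⁆ ^ 2 = ⁅⁅c, g⁆, c⁆ * ⁅c ^ 2, g⁆ := by
    simp only [pow_two]; group
  rw [key]
  exact mul_mem h2 h1

private lemma sq_mem_L3 (hderexp : ∀ x ∈ commutator G, x ^ 2 ∈ (⊤ : Subgroup G).lowerCentralSeries 2)
    {z : G} (hz : z ∈ (⊤ : Subgroup G).lowerCentralSeries 2) : z ^ 2 ∈ (⊤ : Subgroup G).lowerCentralSeries 3 := by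
  let T : Subgroup G :=
    { carrier := {x | x ∈ (⊤ : Subgroup G).lowerCentralSeries 2 ∧ x ^ 2 ∈ (⊤ : Subgroup G).lowerCentralSeries 3}
      one_mem' := ⟨one_mem _, by simpa using one_mem ((⊤ : Subgroup G).lowerCentralSeries 3)⟩
      mul_mem' := by
        rintro x y ⟨hx2, hx3⟩ ⟨hy2, hy3⟩
        refine ⟨mul_mem hx2 hy2, ?_⟩
        have key : (x * y) ^ 2 = x ^ 2 * ⁅x⁻¹, y⁆ * y ^ 2 := by
          simp only [pow_two]; group
        rw [key]
        exact mul_mem (mul_mem hx3 (mem_L_succ (inv_mem hx2) y)) hy3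
      inv_mem' := by
        rintro x ⟨hx2, hx3⟩
        exact ⟨inv_mem hx2, by rw [inv_pow]; exact inv_mem hx3⟩ }
  have hle : (⊤ : Subgroup G).lowerCentralSeries 2 ≤ T := by
    rw [show (⊤ : Subgroup G).lowerCentralSeries 2 = ⁅(⊤ : Subgroup G).lowerCentralSeries 1, ⊤⁆ from Subgroup.lowerCentralSeries_succ ⊤ 1,
      Subgroup.commutator_le]
    intro c hc g _
    exact ⟨mem_L_succ hc g, sq_of_gen hderexp hc g⟩
  exact (hle hz).2

private lemma mk_comm (x y : G) :
    ((⁅x, y⁆ : G) : G ⧸ (⊤ : Subgroup G).lowerCentralSeries 3) = ⁅(x : G ⧸ (⊤ : Subgroup G).lowerCentralSeries 3), (y : G ⧸ (⊤ : Subgroup G).lowerCentralSeries 3)⁆ := by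
  simp [commutatorElement_def]
  rfl

private lemma central_mk {z : G} (hz : z ∈ (⊤ : Subgroup G).lowerCentralSeries 2)
    (q : G ⧸ (⊤ : Subgroup G).lowerCentralSeries 3) :
    q * ((z : G) : G ⧸ (⊤ : Subgroup G).lowerCentralSeries 3) = ((z : G) : G ⧸ (⊤ : Subgroup G).lowerCentralSeries 3) * q := by
  refine QuotientGroup.induction_on q fun g => ?_
  rw [← QuotientGroup.mk_mul, ← QuotientGroup.mk_mul]
  refine QuotientGroup.eq.mpr ?_
  have key : (g * z)⁻¹ * (z * g) = ⁅z⁻¹, g⁻¹⁆ := by group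
  rw [key]
  exact mem_L_succ (inv_mem hz) g⁻¹

private lemma sq_one_mk (hderexp : ∀ x ∈ commutator G, x ^ 2 ∈ (⊤ : Subgroup G).lowerCentralSeries 2)
    {z : G} (hz : z ∈ (⊤ : Subgroup G).lowerCentralSeries 2) :
    ((z : G) : G ⧸ (⊤ : Subgroup G).lowerCentralSeries 3) ^ 2 = 1 := by
  rw [← QuotientGroup.mk_pow, QuotientGroup.eq_one_iff]
  exact sq_mem_L3 hderexp hz

/-! ### Abstract computation helpers -/

section Abstract

variable {Q : Type*} [Group Q]

private lemma c_one_of_central {z : Q} (h : ∀ g, g * z = z * g) (y : Q) : ⁅z, y⁆ = 1 := by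
  rw [commutatorElement_def, ← h y]
  group

private lemma c_one_right {z : Q} (h : ∀ g, g * z = z * g) (y : Q) : ⁅y, z⁆ = 1 := by
  rw [← inv_one, ← c_one_of_central h y, commutatorElement_inv]

private lemma central_inv {z : Q} (h : ∀ g, g * z = z * g) (g : Q) :
    g * z⁻¹ = z⁻¹ * g := by
  have h1 : z * (g * z⁻¹) = z * (z⁻¹ * g) := by
    rw [← mul_assoc, ← h g]
    group
  exact mul_left_cancel h1

private lemma c_central_mul {z : Q} (h : ∀ g, g * z = z * g) (m y : Q) :
    ⁅z * m, y⁆ = ⁅m, y⁆ := by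
  have h1 : ⁅z * m, y⁆ = z * ⁅m, y⁆ * z⁻¹ * ⁅z, y⁆ := by group
  rw [h1, c_one_of_central h, mul_one, ← h ⁅m, y⁆]
  group

private lemma c_inv_right {x c : Q} (h : ∀ g, g * ⁅c, x⁆ = ⁅c, x⁆ * g) :
    ⁅x, c⁻¹⁆ = ⁅c, x⁆ := by
  have h1 : ⁅x, c⁻¹⁆ = c⁻¹ * ⁅c, x⁆ * c := by group
  rw [h1, h c⁻¹]
  group

private lemma inv_eq_self_of_sq {x : Q} (h : x ^ 2 = 1) : x⁻¹ = x := by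
  rw [← mul_one x⁻¹, ← h]
  group

private lemma sqc (x y : Q) : ⁅x ^ 2, y⁆ = ⁅x, ⁅x, y⁆⁆ * ⁅x, y⁆ ^ 2 := by
  simp only [pow_two]; group

private lemma key_calc (A₁ A₂ A₃ z₂ z₃ : Q)
    (Kc : ∀ u v w g : Q, g * ⁅⁅u, v⁆, w⁆ = ⁅⁅u, v⁆, w⁆ * g)
    (Ks : ∀ u v w : Q, ⁅⁅u, v⁆, w⁆ ^ 2 = 1)
    (h1 : ∀ g, g * A₁ ^ 2 = A₁ ^ 2 * g)
    (hz₂ : ∀ g, g * z₂ = z₂ * g)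
    (hz₃ : ∀ g, g * z₃ = z₃ * g)
    (hA2 : A₂ ^ 2 = z₂ * (⁅A₁, A₂⁆ * ⁅A₁, A₃⁆))
    (hA3 : A₃ ^ 2 = z₃ * ⁅A₁, A₂⁆)
    (hW : ∀ g, g * ⁅A₂, A₃⁆ = ⁅A₂, A₃⁆ * g)
    (hWs : ⁅A₂, A₃⁆ ^ 2 = 1) :
    ⁅⁅A₁, A₂⁆, A₁⁆ = 1 ∧ ⁅⁅A₁, A₂⁆, A₂⁆ = 1 ∧ ⁅⁅A₁, A₂⁆, A₃⁆ = 1 ∧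
    ⁅⁅A₁, A₃⁆, A₁⁆ = 1 ∧ ⁅⁅A₁, A₃⁆, A₂⁆ = 1 ∧ ⁅⁅A₁, A₃⁆, A₃⁆ = 1 := by
  have D1 : ∀ y : Q, ⁅A₁, y⁆ ^ 2 = ⁅⁅A₁, y⁆, A₁⁆ := by
    intro y
    have e : ⁅A₁ ^ 2, y⁆ = 1 := c_one_of_central h1 y
    rw [sqc A₁ y] at e
    have e2 : ⁅A₁, y⁆ ^ 2 = ⁅A₁, ⁅A₁, y⁆⁆⁻¹ := by
      apply mul_left_cancel (a := ⁅A₁, ⁅A₁, y⁆⁆)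
      rw [e]; group
    rw [e2, commutatorElement_inv]
  have D2 : ∀ y : Q, ⁅⁅A₁, A₂⁆, y⁆ = ⁅A₃, ⁅A₃, y⁆⁆ * ⁅A₃, y⁆ ^ 2 := by
    intro y
    rw [← sqc A₃ y, hA3, c_central_mul hz₃]
  have c23 : ⁅⁅A₁, A₂⁆, A₃⁆ = 1 := by
    rw [D2 A₃, show ⁅A₃, A₃⁆ = (1 : Q) from by group]
    simp
  have c22 : ⁅⁅A₁, A₂⁆, A₂⁆ = 1 := by
    rw [D2 A₂, show ⁅A₃, A₂⁆ = ⁅A₂, A₃⁆⁻¹ from (commutatorElement_inv A₂ A₃).symm,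
      c_one_right (central_inv hW) A₃, inv_pow, hWs, inv_one, one_mul]
  have E31 : ⁅⁅A₁, A₂⁆, A₁⁆ = ⁅⁅A₁, A₃⁆, A₃⁆ * ⁅⁅A₁, A₃⁆, A₁⁆ := by
    rw [D2 A₁, show ⁅A₃, A₁⁆ = ⁅A₁, A₃⁆⁻¹ from (commutatorElement_inv A₁ A₃).symm,
      c_inv_right (fun g => Kc A₁ A₃ A₃ g), inv_pow, D1 A₃,
      inv_eq_self_of_sq (Ks A₁ A₃ A₁)]
  have D6 : ∀ y : Q, ⁅⁅A₁, A₃⁆, y⁆ * ⁅⁅A₁, A₂⁆, y⁆ = ⁅A₂, ⁅A₂, y⁆⁆ * ⁅A₂, y⁆ ^ 2 := by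
    intro y
    rw [← sqc A₂ y, hA2, c_central_mul hz₂]
    have e : ⁅⁅A₁, A₂⁆ * ⁅A₁, A₃⁆, y⁆ =
        ⁅A₁, A₂⁆ * ⁅⁅A₁, A₃⁆, y⁆ * ⁅A₁, A₂⁆⁻¹ * ⁅⁅A₁, A₂⁆, y⁆ := by group
    rw [e, Kc A₁ A₃ y ⁅A₁, A₂⁆]
    group
  have c32 : ⁅⁅A₁, A₃⁆, A₂⁆ = 1 := by
    have e := D6 A₂
    rw [c22, mul_one, show ⁅A₂, A₂⁆ = (1 : Q) from by group] at e
    simpa using e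
  have c33 : ⁅⁅A₁, A₃⁆, A₃⁆ = 1 := by
    have e := D6 A₃
    rw [c23, mul_one, c_one_right hW A₂, one_mul, hWs] at e
    exact e
  have c31 : ⁅⁅A₁, A₃⁆, A₁⁆ = 1 := by
    have e := D6 A₁
    rw [show ⁅A₂, A₁⁆ = ⁅A₁, A₂⁆⁻¹ from (commutatorElement_inv A₁ A₂).symm,
      c_inv_right (fun g => Kc A₁ A₂ A₂ g), c22, one_mul, inv_pow, D1 A₂,
      inv_eq_self_of_sq (Ks A₁ A₂ A₁)] at e
    have e' : ⁅⁅A₁, A₃⁆, A₁⁆ * ⁅⁅A₁, A₂⁆, A₁⁆ = 1 * ⁅⁅A₁, A₂⁆, A₁⁆ := by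
      rw [one_mul]; exact e
    exact mul_right_cancel e'
  have c21 : ⁅⁅A₁, A₂⁆, A₁⁆ = 1 := by rw [E31, c33, c31, one_mul]
  exact ⟨c21, c22, c23, c31, c32, c33⟩

end Abstract

/-! ### Subgroup machinery for the reduction to generators -/

private def Dsub (G : Type*) [Group G] : Subgroup G where
  carrier := {c | ∀ g : G, ⁅c, g⁆ ∈ (⊤ : Subgroup G).lowerCentralSeries 3}
  one_mem' := by
    intro g
    rw [show ⁅(1 : G), g⁆ = 1 from by group]
    exact one_mem _
  mul_mem' := by
    intro c₁ c₂ h₁ h₂ g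
    have e : ⁅c₁ * c₂, g⁆ = c₁ * ⁅c₂, g⁆ * c₁⁻¹ * ⁅c₁, g⁆ := by group
    rw [e]
    exact mul_mem ((Subgroup.lowerCentralSeries_normal ⊤ 3).conj_mem _ (h₂ g) c₁) (h₁ g)
  inv_mem' := by
    intro c h g
    have e : ⁅c⁻¹, g⁆ = c⁻¹ * ⁅c, g⁆⁻¹ * c⁻¹⁻¹ := by group
    rw [e]
    exact (Subgroup.lowerCentralSeries_normal ⊤ 3).conj_mem _ (inv_mem (h g)) c⁻¹

private lemma Dsub_spec {c : G} (h : c ∈ Dsub G) (g : G) :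
    ⁅c, g⁆ ∈ (⊤ : Subgroup G).lowerCentralSeries 3 := h g

private lemma Dsub_mem {c : G} (h : ∀ g : G, ⁅c, g⁆ ∈ (⊤ : Subgroup G).lowerCentralSeries 3) :
    c ∈ Dsub G := h

private lemma Dsub_conj {c : G} (hc : c ∈ Dsub G) (h : G) : h * c * h⁻¹ ∈ Dsub G := by
  refine Dsub_mem fun g => ?_
  have e : ⁅h * c * h⁻¹, g⁆ = h * ⁅c, h⁻¹ * g * h⁆ * h⁻¹ := by group
  rw [e]
  exact (Subgroup.lowerCentralSeries_normal ⊤ 3).conj_mem _ (Dsub_spec hc _) h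

/-- Elements `g` such that `⁅c, g⁆ ∈ H`, for a conjugation-stable `H`. -/
private def rightComm (c : G) (H : Subgroup G)
    (hH : ∀ x ∈ H, ∀ g : G, g * x * g⁻¹ ∈ H) : Subgroup G where
  carrier := {g | ⁅c, g⁆ ∈ H}
  one_mem' := by
    show ⁅c, (1 : G)⁆ ∈ H
    rw [show ⁅c, (1 : G)⁆ = 1 from by group]
    exact one_mem _
  mul_mem' := by
    intro g₁ g₂ h₁ h₂
    show ⁅c, g₁ * g₂⁆ ∈ H
    have e : ⁅c, g₁ * g₂⁆ = ⁅c, g₁⁆ * (g₁ * ⁅c, g₂⁆ * g₁⁻¹) := by group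
    rw [e]
    exact mul_mem h₁ (hH _ h₂ g₁)
  inv_mem' := by
    intro g h
    show ⁅c, g⁻¹⁆ ∈ H
    have e : ⁅c, g⁻¹⁆ = g⁻¹ * ⁅c, g⁆⁻¹ * g⁻¹⁻¹ := by group
    rw [e]
    exact hH _ (inv_mem h) g⁻¹

/-- Elements `x` such that `⁅x, y⁆ ∈ H`, for a conjugation-stable `H`. -/
private def leftComm (y : G) (H : Subgroup G)
    (hH : ∀ x ∈ H, ∀ g : G, g * x * g⁻¹ ∈ H) : Subgroup G where
  carrier := {x | ⁅x, y⁆ ∈ H}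
  one_mem' := by
    show ⁅(1 : G), y⁆ ∈ H
    rw [show ⁅(1 : G), y⁆ = 1 from by group]
    exact one_mem _
  mul_mem' := by
    intro x₁ x₂ h₁ h₂
    show ⁅x₁ * x₂, y⁆ ∈ H
    have e : ⁅x₁ * x₂, y⁆ = x₁ * ⁅x₂, y⁆ * x₁⁻¹ * ⁅x₁, y⁆ := by group
    rw [e]
    exact mul_mem (hH _ h₂ x₁) h₁
  inv_mem' := by
    intro x h
    show ⁅x⁻¹, y⁆ ∈ H
    have e : ⁅x⁻¹, y⁆ = x⁻¹ * ⁅x, y⁆⁻¹ * x⁻¹⁻¹ := by group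
    rw [e]
    exact hH _ (inv_mem h) x⁻¹

end Gp32041

open Gp32041 in
/-- Let `G` be a finite 2-group generated by `a₁, a₂, a₃` with relations modulo
`G₃ = [G,G']`: `a₁² ≡ 1`, `a₂² ≡ c₁₂c₁₃`, `a₃² ≡ c₁₂`, `c₂₃ ∈ G₃`, such that `G/G₃`
has order 32 and `G'/G₃ ≅ (ℤ/2)²` (Hall–Senior group 32.041). Then `G₃ = G₄`,
hence `G₃` is trivial and `|G| = 32`. -/
theorem group_32_041_rigid {G : Type*} [Group G] [Finite G] (hp : IsPGroup 2 G)
    (a₁ a₂ a₃ : G) (hgen : Subgroup.closure {a₁, a₂, a₃} = (⊤ : Subgroup G))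
    (h1 : a₁ ^ 2 ∈ (⊤ : Subgroup G).lowerCentralSeries 2)
    (h2 : a₂ ^ 2 * (⁅a₁, a₂⁆ * ⁅a₁, a₃⁆)⁻¹ ∈ (⊤ : Subgroup G).lowerCentralSeries 2)
    (h3 : a₃ ^ 2 * (⁅a₁, a₂⁆)⁻¹ ∈ (⊤ : Subgroup G).lowerCentralSeries 2)
    (h23 : ⁅a₂, a₃⁆ ∈ (⊤ : Subgroup G).lowerCentralSeries 2)
    (hcard : Nat.card (G ⧸ (⊤ : Subgroup G).lowerCentralSeries 2) = 32)
    (hder4 : Nat.card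
      (Subgroup.map (QuotientGroup.mk' ((⊤ : Subgroup G).lowerCentralSeries 2)) (commutator G)) = 4)
    (hderexp : ∀ x ∈ commutator G, x ^ 2 ∈ (⊤ : Subgroup G).lowerCentralSeries 2) :
    (⊤ : Subgroup G).lowerCentralSeries 2 = (⊤ : Subgroup G).lowerCentralSeries 3 ∧
    (⊤ : Subgroup G).lowerCentralSeries 2 = ⊥ ∧ Nat.card G = 32 := by
  -- Work in the quotient Q = G / G₄.
  set Q := G ⧸ (⊤ : Subgroup G).lowerCentralSeries 3 with hQ
  have Kc : ∀ u v w g : Q, g * ⁅⁅u, v⁆, w⁆ = ⁅⁅u, v⁆, w⁆ * g := by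
    intro u v w g
    refine QuotientGroup.induction_on u fun x =>
      QuotientGroup.induction_on v fun y =>
        QuotientGroup.induction_on w fun h => ?_
    rw [← mk_comm, ← mk_comm]
    exact central_mk (mem_L_succ (comm_mem_L1 x y) h) g
  have Ks : ∀ u v w : Q, ⁅⁅u, v⁆, w⁆ ^ 2 = 1 := by
    intro u v w
    refine QuotientGroup.induction_on u fun x =>
      QuotientGroup.induction_on v fun y =>
        QuotientGroup.induction_on w fun h => ?_
    rw [← mk_comm, ← mk_comm]
    exact sq_one_mk hderexp (mem_L_succ (comm_mem_L1 x y) h)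
  have h1Q : ∀ g : Q, g * ((a₁ : Q)) ^ 2 = ((a₁ : Q)) ^ 2 * g := by
    intro g
    rw [← QuotientGroup.mk_pow]
    exact central_mk h1 g
  have hA2 : ((a₂ : Q)) ^ 2 =
      ((a₂ ^ 2 * (⁅a₁, a₂⁆ * ⁅a₁, a₃⁆)⁻¹ : G) : Q) * (⁅(a₁ : Q), (a₂ : Q)⁆ * ⁅(a₁ : Q), (a₃ : Q)⁆) := by
    rw [← mk_comm, ← mk_comm, ← QuotientGroup.mk_mul, ← QuotientGroup.mk_mul,
      ← QuotientGroup.mk_pow]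
    congr 1
    group
  have hA3 : ((a₃ : Q)) ^ 2 =
      ((a₃ ^ 2 * (⁅a₁, a₂⁆)⁻¹ : G) : Q) * ⁅(a₁ : Q), (a₂ : Q)⁆ := by
    rw [← mk_comm, ← QuotientGroup.mk_mul, ← QuotientGroup.mk_pow]
    congr 1
    group
  have hW : ∀ g : Q, g * ⁅(a₂ : Q), (a₃ : Q)⁆ = ⁅(a₂ : Q), (a₃ : Q)⁆ * g := by
    intro g
    rw [← mk_comm]
    exact central_mk h23 g
  have hWs : ⁅(a₂ : Q), (a₃ : Q)⁆ ^ 2 = 1 := by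
    rw [← mk_comm]
    exact sq_one_mk hderexp h23
  obtain ⟨c21, c22, c23, c31, c32, c33⟩ :=
    key_calc (a₁ : Q) (a₂ : Q) (a₃ : Q)
      ((a₂ ^ 2 * (⁅a₁, a₂⁆ * ⁅a₁, a₃⁆)⁻¹ : G) : Q)
      ((a₃ ^ 2 * (⁅a₁, a₂⁆)⁻¹ : G) : Q)
      Kc Ks h1Q (central_mk h2) (central_mk h3) hA2 hA3 hW hWs
  -- Translate back to membership statements in G.
  have back : ∀ x y : G, (⁅(x : Q), (y : Q)⁆ = 1) → ⁅x, y⁆ ∈ (⊤ : Subgroup G).lowerCentralSeries 3 := by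
    intro x y h
    rw [← mk_comm] at h
    exact (QuotientGroup.eq_one_iff _).mp h
  have b21 : ⁅⁅a₁, a₂⁆, a₁⁆ ∈ (⊤ : Subgroup G).lowerCentralSeries 3 := by
    refine back _ _ ?_; rw [mk_comm]; exact c21
  have b22 : ⁅⁅a₁, a₂⁆, a₂⁆ ∈ (⊤ : Subgroup G).lowerCentralSeries 3 := by
    refine back _ _ ?_; rw [mk_comm]; exact c22
  have b23 : ⁅⁅a₁, a₂⁆, a₃⁆ ∈ (⊤ : Subgroup G).lowerCentralSeries 3 := by
    refine back _ _ ?_; rw [mk_comm]; exact c23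
  have b31 : ⁅⁅a₁, a₃⁆, a₁⁆ ∈ (⊤ : Subgroup G).lowerCentralSeries 3 := by
    refine back _ _ ?_; rw [mk_comm]; exact c31
  have b32 : ⁅⁅a₁, a₃⁆, a₂⁆ ∈ (⊤ : Subgroup G).lowerCentralSeries 3 := by
    refine back _ _ ?_; rw [mk_comm]; exact c32
  have b33 : ⁅⁅a₁, a₃⁆, a₃⁆ ∈ (⊤ : Subgroup G).lowerCentralSeries 3 := by
    refine back _ _ ?_; rw [mk_comm]; exact c33
  -- Each commutator of generators lies in Dsub G.
  have hgenmem : ∀ x : G, x ∈ Subgroup.closure ({a₁, a₂, a₃} : Set G) := by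
    intro x
    rw [hgen]
    exact Subgroup.mem_top x
  have hD12 : ⁅a₁, a₂⁆ ∈ Dsub G := by
    refine Dsub_mem fun g => ?_
    have hsub : Subgroup.closure ({a₁, a₂, a₃} : Set G) ≤
        rightComm ⁅a₁, a₂⁆ ((⊤ : Subgroup G).lowerCentralSeries 3)
          (fun x hx g' => (Subgroup.lowerCentralSeries_normal ⊤ 3).conj_mem x hx g') := by
      refine Subgroup.closure_le _ |>.mpr ?_
      rintro c (rfl | rfl | rfl)
      · exact b21
      · exact b22
      · exact b23
    exact hsub (hgenmem g)
  have hD13 : ⁅a₁, a₃⁆ ∈ Dsub G := by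
    refine Dsub_mem fun g => ?_
    have hsub : Subgroup.closure ({a₁, a₂, a₃} : Set G) ≤
        rightComm ⁅a₁, a₃⁆ ((⊤ : Subgroup G).lowerCentralSeries 3)
          (fun x hx g' => (Subgroup.lowerCentralSeries_normal ⊤ 3).conj_mem x hx g') := by
      refine Subgroup.closure_le _ |>.mpr ?_
      rintro c (rfl | rfl | rfl)
      · exact b31
      · exact b32
      · exact b33
    exact hsub (hgenmem g)
  have hD23 : ⁅a₂, a₃⁆ ∈ Dsub G :=
    Dsub_mem fun g => mem_L_succ h23 g
  have hself : ∀ u : G, ⁅u, u⁆ ∈ Dsub G := by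
    intro u
    rw [show ⁅u, u⁆ = (1 : G) from by group]
    exact one_mem _
  have hswap : ∀ {u v : G}, ⁅u, v⁆ ∈ Dsub G → ⁅v, u⁆ ∈ Dsub G := by
    intro u v h
    rw [← commutatorElement_inv]
    exact inv_mem h
  -- For y a generator, ⁅x, y⁆ ∈ Dsub G for all x.
  have hX : ∀ y ∈ ({a₁, a₂, a₃} : Set G), ∀ x : G, ⁅x, y⁆ ∈ Dsub G := by
    intro y hy x
    have hbase : ∀ c ∈ ({a₁, a₂, a₃} : Set G), ⁅c, y⁆ ∈ Dsub G := by
      rcases hy with rfl | rfl | rfl <;> rintro c (rfl | rfl | rfl)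
      · exact hself _
      · exact hswap hD12
      · exact hswap hD13
      · exact hD12
      · exact hself _
      · exact hswap hD23
      · exact hD13
      · exact hD23
      · exact hself _
    have hsub : Subgroup.closure ({a₁, a₂, a₃} : Set G) ≤
        leftComm y (Dsub G) (fun c hc h => Dsub_conj hc h) :=
      Subgroup.closure_le _ |>.mpr hbase
    exact hsub (hgenmem x)
  -- All commutators lie in Dsub G.
  have hXY : ∀ x y : G, ⁅x, y⁆ ∈ Dsub G := by
    intro x y
    have hsub : Subgroup.closure ({a₁, a₂, a₃} : Set G) ≤
        rightComm x (Dsub G) (fun c hc h => Dsub_conj hc h) :=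
      Subgroup.closure_le _ |>.mpr (fun c hc => hX c hc x)
    exact hsub (hgenmem y)
  -- Main step: G₃ ≤ G₄.
  have hmain : (⊤ : Subgroup G).lowerCentralSeries 2 ≤ (⊤ : Subgroup G).lowerCentralSeries 3 := by
    rw [show (⊤ : Subgroup G).lowerCentralSeries 2 = ⁅(⊤ : Subgroup G).lowerCentralSeries 1, ⊤⁆ from Subgroup.lowerCentralSeries_succ ⊤ 1,
      Subgroup.commutator_le]
    intro c hc g _
    have hL1D : (⊤ : Subgroup G).lowerCentralSeries 1 ≤ Dsub G := by
      rw [lowerCentralSeries_one, commutator_def, Subgroup.commutator_le]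
      intro x _ y _
      exact hXY x y
    exact Dsub_spec (hL1D hc) g
  have eq23 : (⊤ : Subgroup G).lowerCentralSeries 2 = (⊤ : Subgroup G).lowerCentralSeries 3 :=
    le_antisymm hmain (Subgroup.lowerCentralSeries_antitone ⊤ (by norm_num : (2 : ℕ) ≤ 3))
  -- The lower central series stabilizes at G₃, and G is nilpotent, so G₃ = ⊥.
  haveI : Fact (Nat.Prime 2) := ⟨Nat.prime_two⟩
  have hnil : Group.IsNilpotent G := hp.isNilpotent
  obtain ⟨n, hn⟩ := nilpotent_iff_lowerCentralSeries.mp hnil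
  have hstab : ∀ m : ℕ, (⊤ : Subgroup G).lowerCentralSeries (2 + m) = (⊤ : Subgroup G).lowerCentralSeries 2 := by
    intro m
    induction m with
    | zero => rfl
    | succ k ih =>
      rw [show 2 + (k + 1) = (2 + k) + 1 from rfl, lowerCentralSeries_succ, ih,
        ← lowerCentralSeries_succ]
      exact eq23.symm
  have hbot : (⊤ : Subgroup G).lowerCentralSeries 2 = ⊥ := by
    have hle : (⊤ : Subgroup G).lowerCentralSeries (2 + n) ≤ (⊤ : Subgroup G).lowerCentralSeries n :=
      Subgroup.lowerCentralSeries_antitone ⊤ (Nat.le_add_left n 2)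
    rw [hstab n, hn] at hle
    exact le_bot_iff.mp hle
  refine ⟨eq23, hbot, ?_⟩
  rw [hbot] at hcard
  exact (Nat.card_congr (QuotientGroup.quotientBot (G := G)).toEquiv).symm.trans hcard
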